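/- There exists a constant C > 0 such that for every λ ≥ 1 and every measurable u : Q → Sym(2,ℝ) on the unit square Q, one has λ^{-1/2}∫_Q |u|² dx ≤ C ∫_Q h_λ(u) dx, where h_λ is the quasiconvexified integrand. In particular, a uniform bound on ∫_Q h_λ(u_λ) implies λ^{-1/4} u_λ is bounded in L². -/

import Mathlib

noncomputable def frob {n : ℕ} (τ : Matrix (Fin n) (Fin n) ℝ) : ℝ :=
  Real.sqrt (∑ i, ∑ j, (τ i j) ^ 2)

/-- `ρ⁽²⁾(τ) = |τ₁| + |τ₂|`, the sum of absolute values of eigenvalues. -/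
noncomputable def rho2 (τ : Matrix (Fin 2) (Fin 2) ℝ) : ℝ :=
  if h : τ.IsHermitian then |h.eigenvalues 0| + |h.eigenvalues 1| else 0

/-- `H⁽²⁾(τ) = 2|τ₂|`, twice the largest absolute eigenvalue. -/
noncomputable def H2 (τ : Matrix (Fin 2) (Fin 2) ℝ) : ℝ :=
  if h : τ.IsHermitian then 2 * max |h.eigenvalues 0| |h.eigenvalues 1| else 0

/-- the quasiconvexified integrand `h_λ` for `n = 2`. -/
noncomputable def hlam (lam : ℝ) (τ : Matrix (Fin 2) (Fin 2) ℝ) : ℝ :=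
  if Real.sqrt lam ≤ rho2 τ then (frob τ) ^ 2 / Real.sqrt lam + Real.sqrt lam
  else 2 * (rho2 τ - |τ.det| / Real.sqrt lam)

open MeasureTheory

/-- The unit square `Q ⊂ ℝ²`. -/
def unitSquare : Set (Fin 2 → ℝ) := Set.univ.pi fun _ => Set.Icc (0 : ℝ) 1

/-- The trace of a 2×2 real symmetric matrix equals the sum of its eigenvalues. -/
lemma trace_eq_sum_eig (τ : Matrix (Fin 2) (Fin 2) ℝ) (h : τ.IsHermitian) :
    τ.trace = h.eigenvalues 0 + h.eigenvalues 1 := by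
  rw [h.trace_eq_sum_eigenvalues]
  simp [Fin.sum_univ_two]

/-- Pointwise bound: `|τ|²/√λ ≤ h_λ(τ)` for symmetric `τ` and `λ ≥ 1`. -/
lemma key_pointwise (lam : ℝ) (hl : 1 ≤ lam) (τ : Matrix (Fin 2) (Fin 2) ℝ)
    (hτ : τ.IsHermitian) :
    (frob τ) ^ 2 / Real.sqrt lam ≤ hlam lam τ := by
  have hL : (1:ℝ) ≤ Real.sqrt lam := by
    rw [show (1:ℝ) = Real.sqrt 1 by simp]; exact Real.sqrt_le_sqrt hl
  have hL0 : (0:ℝ) < Real.sqrt lam := lt_of_lt_of_le one_pos hL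
  set e0 := hτ.eigenvalues 0 with he0
  set e1 := hτ.eigenvalues 1 with he1
  have hsym : τ 1 0 = τ 0 1 := by
    have := congrFun (congrFun hτ 1) 0
    simpa [Matrix.conjTranspose_apply] using this.symm
  have htr : τ 0 0 + τ 1 1 = e0 + e1 := by
    have := trace_eq_sum_eig τ hτ; simpa [Matrix.trace_fin_two] using this
  have hdet : τ.det = e0 * e1 := by
    have := hτ.det_eq_prod_eigenvalues
    simpa [Fin.prod_univ_two] using this
  have hfrob : (frob τ) ^ 2 = e0 ^ 2 + e1 ^ 2 := by
    have hsum : ∑ i, ∑ j, (τ i j) ^ 2 = τ 0 0 ^ 2 + τ 0 1 ^ 2 + τ 1 0 ^ 2 + τ 1 1 ^ 2 := by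
      simp [Fin.sum_univ_two]; ring
    have h0 : (0:ℝ) ≤ ∑ i, ∑ j, (τ i j) ^ 2 := by positivity
    rw [frob, Real.sq_sqrt h0, hsum, hsym]
    have hd : τ 0 0 * τ 1 1 - τ 0 1 * τ 1 0 = e0 * e1 := by
      rw [← Matrix.det_fin_two, hdet]
    rw [hsym] at hd
    have hexp : e0 ^ 2 + e1 ^ 2 = (e0 + e1) ^ 2 - 2 * (e0 * e1) := by ring
    rw [hexp, ← htr, ← hd]; ring
  have hrho : rho2 τ = |e0| + |e1| := by rw [rho2, dif_pos hτ]
  have habs : |τ.det| = |e0| * |e1| := by rw [hdet, abs_mul]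
  by_cases hcase : Real.sqrt lam ≤ rho2 τ
  · rw [hlam, if_pos hcase]
    linarith [hL0.le]
  · rw [hlam, if_neg hcase]
    push_neg at hcase
    rw [hrho] at hcase
    have key2 : 2 * (rho2 τ - |τ.det| / Real.sqrt lam)
        = (2 * (|e0| + |e1|) * Real.sqrt lam - 2 * (|e0| * |e1|)) / Real.sqrt lam := by
      rw [hrho, habs]; field_simp
    rw [key2, hfrob, div_le_div_iff₀ hL0 hL0]
    have h1 : e0 ^ 2 = |e0| ^ 2 := (sq_abs e0).symm
    have h2 : e1 ^ 2 = |e1| ^ 2 := (sq_abs e1).symm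
    rw [h1, h2]
    nlinarith [abs_nonneg e0, abs_nonneg e1,
      mul_nonneg (add_nonneg (abs_nonneg e0) (abs_nonneg e1)) (mul_nonneg hL0.le hL0.le),
      mul_nonneg (mul_nonneg (add_nonneg (abs_nonneg e0) (abs_nonneg e1)) hL0.le)
        (sub_nonneg.mpr hcase.le)]

/-- there is a universal constant `C > 0` such that for all `λ ≥ 1` and all
measurable symmetric-matrix-valued fields `u` on the unit square,
`λ^{-1/2} ∫_Q |u|² dx ≤ C ∫_Q h_λ(u) dx`. -/
theorem sq_int_le_hlam_int :
    ∃ C : ℝ, 0 < C ∧ ∀ lam : ℝ, 1 ≤ lam →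
      ∀ u : (Fin 2 → ℝ) → Matrix (Fin 2) (Fin 2) ℝ,
        (∀ x, (u x).IsHermitian) → (∀ i j, Measurable fun x => u x i j) →
        ENNReal.ofReal (Real.sqrt lam)⁻¹ *
            ∫⁻ x in unitSquare, ENNReal.ofReal ((frob (u x)) ^ 2) ≤
          ENNReal.ofReal C * ∫⁻ x in unitSquare, ENNReal.ofReal (hlam lam (u x)) := by
  refine ⟨1, one_pos, fun lam hl u hherm _ => ?_⟩
  have hL0 : (0:ℝ) < Real.sqrt lam :=
    Real.sqrt_pos.mpr (lt_of_lt_of_le one_pos hl)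
  rw [ENNReal.ofReal_one, one_mul,
    ← lintegral_const_mul' (ENNReal.ofReal (Real.sqrt lam)⁻¹) _ ENNReal.ofReal_ne_top]
  refine lintegral_mono fun x => ?_
  rw [← ENNReal.ofReal_mul (by positivity)]
  apply ENNReal.ofReal_le_ofReal
  rw [inv_mul_eq_div]
  exact key_pointwise lam hl (u x) (hherm x)
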